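/- Let p be a nonzero binary cubic with coefficients (λ₁,λ₂,λ₃,λ₄), so p(s,t) = λ₁s³+λ₂s²t+λ₃st²+λ₄t³, with partial derivatives p₁(s,t) = 3λ₁s²+2λ₂st+λ₃t² and p₂(s,t) = λ₂s²+2λ₃st+3λ₄t². Let x,y,z,w ∈ ℝ satisfy the half-flat condition p(y,−x) − y·p₁(w,−z) + x·p₂(w,−z) = 0, and suppose the cubic Q(x,y,z,w) := (1/3)(xu₁+yu₂)³ − (xu₁+yu₂)(zu₁+wu₂)² has vanishing discriminant, Δ₃(Q(x,y,z,w)) = 0. Then either Q(x,y,z,w) = 0, or: (x,y) ≠ (0,0), the linear form xu₁+yu₂ divides p (i.e. p(y,−x) = 0), and there exists μ ∈ ℝ such that Q(x,y,z,w) = μ·(xu₁+yu₂)³, i.e. its coefficients equal μ·(x³, 3x²y, 3xy², y³). -/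

import Mathlib

noncomputable section

/-- The discriminant of a binary cubic `q 0 • u₁³ + q 1 • u₁²u₂ + q 2 • u₁u₂² + q 3 • u₂³`. -/
def disc3 (q : Fin 4 → ℝ) : ℝ :=
  q 1 ^ 2 * q 2 ^ 2 - 4 * q 0 * q 2 ^ 3 - 4 * q 1 ^ 3 * q 3 +
    18 * q 0 * q 1 * q 2 * q 3 - 27 * q 0 ^ 2 * q 3 ^ 2

/-- The coefficient vector of the binary cubic
`Q(x,y,z,w) = (1/3)(x u₁ + y u₂)³ − (x u₁ + y u₂)(z u₁ + w u₂)²`. -/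
def Qcoeff (x y z w : ℝ) : Fin 4 → ℝ :=
  ![x ^ 3 / 3 - x * z ^ 2, x ^ 2 * y - 2 * x * z * w - y * z ^ 2,
    x * y ^ 2 - x * w ^ 2 - 2 * y * z * w, y ^ 3 / 3 - y * w ^ 2]

/-- The binary cubic `p(s,t) = λ₁s³ + λ₂s²t + λ₃st² + λ₄t³` with coefficient vector `l`. -/
def cubicP (l : Fin 4 → ℝ) (s t : ℝ) : ℝ :=
  l 0 * s ^ 3 + l 1 * s ^ 2 * t + l 2 * s * t ^ 2 + l 3 * t ^ 3

/-- The partial derivative of `cubicP l` in its first variable. -/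
def cubicP1 (l : Fin 4 → ℝ) (s t : ℝ) : ℝ :=
  3 * l 0 * s ^ 2 + 2 * l 1 * s * t + l 2 * t ^ 2

/-- The partial derivative of `cubicP l` in its second variable. -/
def cubicP2 (l : Fin 4 → ℝ) (s t : ℝ) : ℝ :=
  l 1 * s ^ 2 + 2 * l 2 * s * t + 3 * l 3 * t ^ 2

theorem stmt18 (l : Fin 4 → ℝ) (hl : l ≠ 0) (x y z w : ℝ)
    (hhf : cubicP l y (-x) - y * cubicP1 l w (-z) + x * cubicP2 l w (-z) = 0)
    (hdisc : disc3 (Qcoeff x y z w) = 0) :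
    Qcoeff x y z w = 0 ∨
      ((x, y) ≠ (0, 0) ∧ cubicP l y (-x) = 0 ∧
        ∃ μ : ℝ, Qcoeff x y z w = μ • ![x ^ 3, 3 * x ^ 2 * y, 3 * x * y ^ 2, y ^ 3]) := by
  -- The discriminant is (4/3)(xw−yz)⁶, so it vanishes iff xw = yz.
  have hD : x * w - y * z = 0 := by
    have h : (4 / 3 : ℝ) * (x * w - y * z) ^ 6 = 0 := by
      rw [← hdisc]
      simp only [disc3, Qcoeff]
      norm_num [Matrix.cons_val_zero, Matrix.cons_val_one, Matrix.head_cons, Matrix.cons_val_two, Matrix.cons_val_three, Matrix.tail_cons]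
      ring
    have h6 : (x * w - y * z) ^ 6 = 0 := by linarith
    exact pow_eq_zero_iff (by norm_num) |>.mp h6
  by_cases hxy : x = 0 ∧ y = 0
  · left
    obtain ⟨hx, hy⟩ := hxy
    subst hx; subst hy
    funext i
    fin_cases i <;> simp [Qcoeff]
  · -- (x,y) ≠ 0; set t so that z = t x, w = t y.
    have hxy2 : x ^ 2 + y ^ 2 ≠ 0 := by
      intro h
      apply hxy
      constructor <;> nlinarith [sq_nonneg x, sq_nonneg y]
    obtain ⟨t, hz, hw⟩ : ∃ t : ℝ, z = t * x ∧ w = t * y := by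
      refine ⟨(x * z + y * w) / (x ^ 2 + y ^ 2), ?_, ?_⟩
      · field_simp
        linear_combination (-y) * hD
      · field_simp
        linear_combination x * hD
    subst hz; subst hw
    -- half-flat condition becomes (1 − 3t²) p(y,−x) = 0
    have key : (1 - 3 * t ^ 2) * cubicP l y (-x) = 0 := by
      rw [← hhf]
      simp only [cubicP, cubicP1, cubicP2]
      ring
    by_cases h3 : 1 - 3 * t ^ 2 = 0
    · left
      funext i
      fin_cases i
      · simp [Qcoeff]; linear_combination (x ^ 3 / 3) * h3
      · simp [Qcoeff]; linear_combination (x ^ 2 * y) * h3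
      · simp [Qcoeff]; linear_combination (x * y ^ 2) * h3
      · simp [Qcoeff]; linear_combination (y ^ 3 / 3) * h3
    · right
      refine ⟨?_, ?_, (1 - 3 * t ^ 2) / 3, ?_⟩
      · intro h
        apply hxy
        exact ⟨congrArg Prod.fst h, congrArg Prod.snd h⟩
      · rcases mul_eq_zero.mp key with h | h
        · exact absurd h h3
        · exact h
      · funext i
        fin_cases i <;> (simp [Qcoeff]; ring)
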